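/- Let S ∈ V, ε := −H₀(S,S), and W := {x ∈ V : H₀(S,x) = 0}. Then: K_S(S) = 0; K_S(V) ⊆ W; K_S(K_S(x)) = ε·x for all x ∈ W; H₀(K_S x, y) = −H₀(x, K_S y) for all x, y ∈ V; and H₀(K_S x, K_S y) = −ε·H₀(x, y) for all x, y ∈ W. In particular, for ε = ±1 the pair (H₀|_W, K_S|_W) is an ε-Hermitian structure on the 6-dimensional space W. -/

import Mathlib

noncomputable section

noncomputable section

/-- `V = ℝ⁷` with its standard basis. -/
abbrev V7 : Type := Fin 7 → ℝ

/-- Evaluation of the basis 3-form `eⁱ ∧ eʲ ∧ eᵏ` on `(x, y, z)`: the determinant of the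
3×3 matrix of the corresponding coordinates. -/
def tripleDet (i j k : Fin 7) (x y z : V7) : ℝ :=
  x i * (y j * z k - y k * z j) - x j * (y i * z k - y k * z i) + x k * (y i * z j - y j * z i)

/-- The split-generic 3-form `Φ₀ = −e¹∧e⁴∧e⁷ + √2·e¹∧e⁵∧e⁶ + √2·e²∧e³∧e⁷ + e²∧e⁴∧e⁵ + e³∧e⁴∧e⁶`
(indices here are 0-indexed). -/
def Phi0 (x y z : V7) : ℝ :=
  -(tripleDet 0 3 6 x y z) + Real.sqrt 2 * tripleDet 0 4 5 x y z
    + Real.sqrt 2 * tripleDet 1 2 6 x y z + tripleDet 1 3 4 x y z + tripleDet 2 3 5 x y z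

/-- The symmetric bilinear form `H₀` of signature (3,4):
`H₀(E₁,E₇) = H₀(E₂,E₅) = H₀(E₃,E₆) = 1`, `H₀(E₄,E₄) = −1` (1-indexed). -/
def H0 (x y : V7) : ℝ :=
  x 0 * y 6 + x 6 * y 0 + x 1 * y 4 + x 4 * y 1 + x 2 * y 5 + x 5 * y 2 - x 3 * y 3

/-- The `H₀`-orthogonal complement `W = ⟨S⟩^⊥ = {x ∈ V : H₀(S,x) = 0}`. -/
def Wperp (S : V7) : Submodule ℝ V7 where
  carrier := {x | H0 S x = 0}
  add_mem' := by
    intro a b ha hb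
    simp only [Set.mem_setOf_eq, H0, Pi.add_apply] at *
    linarith
  zero_mem' := by simp [H0]
  smul_mem' := by
    intro c a ha
    simp only [Set.mem_setOf_eq, H0, Pi.smul_apply, smul_eq_mul] at *
    linear_combination c * ha


lemma H0_symm (x y : V7) : H0 x y = H0 y x := by simp only [H0]; ring

lemma H0_add_right (x y z : V7) : H0 x (y + z) = H0 x y + H0 x z := by
  simp only [H0, Pi.add_apply]; ring

lemma H0_sub_right (x y z : V7) : H0 x (y - z) = H0 x y - H0 x z := by
  simp only [H0, Pi.sub_apply]; ring

lemma H0_smul_right (c : ℝ) (x y : V7) : H0 x (c • y) = c * H0 x y := by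
  simp only [H0, Pi.smul_apply, smul_eq_mul]; ring

lemma H0_add_left (x y z : V7) : H0 (x + y) z = H0 x z + H0 y z := by
  simp only [H0, Pi.add_apply]; ring

lemma H0_smul_left (c : ℝ) (x y : V7) : H0 (c • x) y = c * H0 x y := by
  simp only [H0, Pi.smul_apply, smul_eq_mul]; ring

lemma H0_eq_zero (x : V7) (h : ∀ z : V7, H0 x z = 0) : x = 0 := by
  have g6 : x 6 = 0 := by simpa [H0] using h (fun j => if j = (0:Fin 7) then (1:ℝ) else 0)
  have g4 : x 4 = 0 := by simpa [H0] using h (fun j => if j = (1:Fin 7) then (1:ℝ) else 0)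
  have g5 : x 5 = 0 := by simpa [H0] using h (fun j => if j = (2:Fin 7) then (1:ℝ) else 0)
  have g3 : x 3 = 0 := by
    have := h (fun j => if j = (3:Fin 7) then (1:ℝ) else 0)
    simp [H0] at this
    linarith
  have g1 : x 1 = 0 := by simpa [H0] using h (fun j => if j = (4:Fin 7) then (1:ℝ) else 0)
  have g2 : x 2 = 0 := by simpa [H0] using h (fun j => if j = (5:Fin 7) then (1:ℝ) else 0)
  have g0 : x 0 = 0 := by simpa [H0] using h (fun j => if j = (6:Fin 7) then (1:ℝ) else 0)
  funext i
  fin_cases i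
  · exact g0
  · exact g1
  · exact g2
  · exact g3
  · exact g4
  · exact g5
  · exact g6

/-- With `ε := −H₀(S,S)` and `W := {x : H₀(S,x) = 0}`: `K_S(S) = 0`; `K_S(V) ⊆ W`;
`K_S² = ε·id` on `W`; `K_S` is `H₀`-skew; and `H₀(K_S x, K_S y) = −ε·H₀(x,y)` on `W`.
In particular, for `ε = ±1` the pair `(H₀|_W, K_S|_W)` is an `ε`-Hermitian structure on the
6-dimensional space `W`. -/
theorem crossMap_eps_hermitian (S : V7) (K : V7 →ₗ[ℝ] V7)
    (hK : ∀ x y : V7, H0 (K x) y = Phi0 S x y) :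
    K S = 0 ∧
    (∀ x : V7, K x ∈ Wperp S) ∧
    (∀ x ∈ Wperp S, K (K x) = (-(H0 S S)) • x) ∧
    (∀ x y : V7, H0 (K x) y = -(H0 x (K y))) ∧
    (∀ x ∈ Wperp S, ∀ y ∈ Wperp S, H0 (K x) (K y) = -(-(H0 S S)) * H0 x y) ∧
    ((-(H0 S S) = -1 ∨ -(H0 S S) = 1) →
      Module.finrank ℝ (Wperp S) = 6 ∧
      (∀ x ∈ Wperp S, (∀ y ∈ Wperp S, H0 x y = 0) → x = 0) ∧
      (-(H0 S S) = 1 →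
        Module.finrank ℝ (Module.End.eigenspace K 1) =
          Module.finrank ℝ (Module.End.eigenspace K (-1)))) := by
  have h2 : Real.sqrt 2 * Real.sqrt 2 = 2 := Real.mul_self_sqrt (by norm_num)
  have hc0 : ∀ v : V7, K v 0 = (-1) * S 0 * v 3 + S 1 * Real.sqrt 2 * v 2 + (-1) * S 2 * Real.sqrt 2 * v 1 + S 3 * v 0 := by
    intro v
    have h := hK v (fun j => if j = (6:Fin 7) then (1:ℝ) else 0)
    simp [H0, Phi0, tripleDet] at h
    linear_combination h
  have hc1 : ∀ v : V7, K v 1 = (-1) * S 0 * Real.sqrt 2 * v 5 + S 1 * v 3 + (-1) * S 3 * v 1 + S 5 * Real.sqrt 2 * v 0 := by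
    intro v
    have h := hK v (fun j => if j = (4:Fin 7) then (1:ℝ) else 0)
    simp [H0, Phi0, tripleDet] at h
    linear_combination h
  have hc2 : ∀ v : V7, K v 2 = S 0 * Real.sqrt 2 * v 4 + S 2 * v 3 + (-1) * S 3 * v 2 + (-1) * S 4 * Real.sqrt 2 * v 0 := by
    intro v
    have h := hK v (fun j => if j = (5:Fin 7) then (1:ℝ) else 0)
    simp [H0, Phi0, tripleDet] at h
    linear_combination h
  have hc3 : ∀ v : V7, K v 3 = (-1) * S 0 * v 6 + S 1 * v 4 + S 2 * v 5 + (-1) * S 4 * v 1 + (-1) * S 5 * v 2 + S 6 * v 0 := by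
    intro v
    have h := hK v (fun j => if j = (3:Fin 7) then (1:ℝ) else 0)
    simp [H0, Phi0, tripleDet] at h
    linear_combination -h
  have hc4 : ∀ v : V7, K v 4 = S 2 * Real.sqrt 2 * v 6 + S 3 * v 4 + (-1) * S 4 * v 3 + (-1) * S 6 * Real.sqrt 2 * v 2 := by
    intro v
    have h := hK v (fun j => if j = (1:Fin 7) then (1:ℝ) else 0)
    simp [H0, Phi0, tripleDet] at h
    linear_combination h
  have hc5 : ∀ v : V7, K v 5 = (-1) * S 1 * Real.sqrt 2 * v 6 + S 3 * v 5 + (-1) * S 5 * v 3 + S 6 * Real.sqrt 2 * v 1 := by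
    intro v
    have h := hK v (fun j => if j = (2:Fin 7) then (1:ℝ) else 0)
    simp [H0, Phi0, tripleDet] at h
    linear_combination h
  have hc6 : ∀ v : V7, K v 6 = (-1) * S 3 * v 6 + S 4 * Real.sqrt 2 * v 5 + (-1) * S 5 * Real.sqrt 2 * v 4 + S 6 * v 3 := by
    intro v
    have h := hK v (fun j => if j = (0:Fin 7) then (1:ℝ) else 0)
    simp [H0, Phi0, tripleDet] at h
    linear_combination h
  have p1 : K S = 0 := by
    funext i
    fin_cases i
    · show K S 0 = 0; rw [hc0 S]; ring
    · show K S 1 = 0; rw [hc1 S]; ring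
    · show K S 2 = 0; rw [hc2 S]; ring
    · show K S 3 = 0; rw [hc3 S]; ring
    · show K S 4 = 0; rw [hc4 S]; ring
    · show K S 5 = 0; rw [hc5 S]; ring
    · show K S 6 = 0; rw [hc6 S]; ring
  have p2 : ∀ x : V7, K x ∈ Wperp S := by
    intro x
    show H0 S (K x) = 0
    simp only [H0, hc0, hc1, hc2, hc3, hc4, hc5, hc6]
    ring
  have p3 : ∀ x ∈ Wperp S, K (K x) = (-(H0 S S)) • x := by
    intro v hv
    have hx' : H0 S v = 0 := hv
    simp only [H0] at hx'
    funext i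
    have expand : ∀ j : Fin 7, True := fun _ => trivial
    fin_cases i
    · show K (K v) 0 = -(H0 S S) * v 0
      simp only [hc0, hc1, hc2, hc3, hc4, hc5, hc6, H0]
      linear_combination S 0 * hx' + (S 0 * S 1 * v 4 + S 0 * S 2 * v 5 + (-1) * S 1 * S 4 * v 0 + (-1) * S 2 * S 5 * v 0) * h2
    · show K (K v) 1 = -(H0 S S) * v 1
      simp only [hc0, hc1, hc2, hc3, hc4, hc5, hc6, H0]
      linear_combination S 1 * hx' + (S 0 * S 1 * v 6 + (-1) * S 0 * S 6 * v 1 + S 1 * S 5 * v 2 + (-1) * S 2 * S 5 * v 1) * h2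
    · show K (K v) 2 = -(H0 S S) * v 2
      simp only [hc0, hc1, hc2, hc3, hc4, hc5, hc6, H0]
      linear_combination S 2 * hx' + (S 0 * S 2 * v 6 + (-1) * S 0 * S 6 * v 2 + (-1) * S 1 * S 4 * v 2 + S 2 * S 4 * v 1) * h2
    · show K (K v) 3 = -(H0 S S) * v 3
      simp only [hc0, hc1, hc2, hc3, hc4, hc5, hc6, H0]
      linear_combination S 3 * hx' + (0) * h2
    · show K (K v) 4 = -(H0 S S) * v 4
      simp only [hc0, hc1, hc2, hc3, hc4, hc5, hc6, H0]
      linear_combination S 4 * hx' + ((-1) * S 0 * S 6 * v 4 + S 2 * S 4 * v 5 + (-1) * S 2 * S 5 * v 4 + S 4 * S 6 * v 0) * h2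
    · show K (K v) 5 = -(H0 S S) * v 5
      simp only [hc0, hc1, hc2, hc3, hc4, hc5, hc6, H0]
      linear_combination S 5 * hx' + ((-1) * S 0 * S 6 * v 5 + (-1) * S 1 * S 4 * v 5 + S 1 * S 5 * v 4 + S 5 * S 6 * v 0) * h2
    · show K (K v) 6 = -(H0 S S) * v 6
      simp only [hc0, hc1, hc2, hc3, hc4, hc5, hc6, H0]
      linear_combination S 6 * hx' + ((-1) * S 1 * S 4 * v 6 + (-1) * S 2 * S 5 * v 6 + S 4 * S 6 * v 1 + S 5 * S 6 * v 2) * h2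
  have p4 : ∀ x y : V7, H0 (K x) y = -(H0 x (K y)) := by
    intro x y
    simp only [H0, hc0, hc1, hc2, hc3, hc4, hc5, hc6]
    ring
  have p5 : ∀ x ∈ Wperp S, ∀ y ∈ Wperp S, H0 (K x) (K y) = -(-(H0 S S)) * H0 x y := by
    intro x _ y hy
    rw [p4 x (K y), p3 y hy, H0_smul_right]
    ring
  have hnd : H0 S S ≠ 0 → ∀ x ∈ Wperp S, (∀ y ∈ Wperp S, H0 x y = 0) → x = 0 := by
    intro hS x hx hxy
    apply H0_eq_zero
    intro z
    have hw : z - (H0 S z / H0 S S) • S ∈ Wperp S := by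
      show H0 S (z - (H0 S z / H0 S S) • S) = 0
      rw [H0_sub_right, H0_smul_right]
      field_simp
      ring
    have h1 := hxy _ hw
    rw [H0_sub_right, H0_smul_right] at h1
    have hxS : H0 x S = 0 := by rw [H0_symm]; exact hx
    rw [hxS, mul_zero, sub_zero] at h1
    exact h1
  have hdec : H0 S S ≠ 0 → ∀ w ∈ Wperp S, ∃ z : V7, w = z + (H0 S w / H0 S S) • S ∧ True := by
    intro _ w _; exact ⟨w - (H0 S w / H0 S S) • S, by abel, trivial⟩
  refine ⟨p1, p2, p3, p4, p5, ?_⟩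
  intro heps
  have hS : H0 S S ≠ 0 := by
    rcases heps with h | h <;> intro h' <;> rw [h'] at h <;> norm_num at h
  have hfin : Module.finrank ℝ (Wperp S) = 6 := by
    let f : V7 →ₗ[ℝ] ℝ :=
      { toFun := fun x => H0 S x
        map_add' := by intro a b; simp only [H0, Pi.add_apply]; ring
        map_smul' := by
          intro c a
          simp only [H0, Pi.smul_apply, smul_eq_mul, RingHom.id_apply]; ring }
    have hker : Wperp S = LinearMap.ker f := rfl
    have hrange : LinearMap.range f = ⊤ := by
      rw [LinearMap.range_eq_top]
      intro c
      refine ⟨(c / H0 S S) • S, ?_⟩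
      show H0 S ((c / H0 S S) • S) = c
      rw [H0_smul_right]
      field_simp
    have hfr := LinearMap.finrank_range_add_finrank_ker f
    rw [hrange, finrank_top, Module.finrank_self, Module.finrank_fin_fun] at hfr
    rw [hker]
    omega
  refine ⟨hfin, hnd hS, ?_⟩
  intro he1
  set E1 := Module.End.eigenspace K 1 with hE1def
  set E2 := Module.End.eigenspace K (-1) with hE2def
  have hE1W : ∀ x : V7, x ∈ E1 → x ∈ Wperp S := by
    intro x hx
    rw [hE1def, Module.End.mem_eigenspace_iff] at hx
    have := p2 x
    rw [hx, one_smul] at this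
    exact this
  have hE2W : ∀ x : V7, x ∈ E2 → x ∈ Wperp S := by
    intro x hx
    rw [hE2def, Module.End.mem_eigenspace_iff] at hx
    have h' := (Wperp S).smul_mem (-1 : ℝ) (p2 x)
    rw [hx] at h'
    simpa [smul_smul] using h'
  have hiso1 : ∀ x ∈ E1, ∀ y ∈ E1, H0 x y = 0 := by
    intro x hx y hy
    rw [hE1def, Module.End.mem_eigenspace_iff] at hx hy
    have h := p4 x y
    rw [hx, hy, H0_smul_left, H0_smul_right] at h
    linarith
  have hiso2 : ∀ x ∈ E2, ∀ y ∈ E2, H0 x y = 0 := by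
    intro x hx y hy
    rw [hE2def, Module.End.mem_eigenspace_iff] at hx hy
    have h := p4 x y
    rw [hx, hy, H0_smul_left, H0_smul_right] at h
    linarith
  have hdecomp : ∀ w ∈ Wperp S, ∃ a ∈ E1, ∃ b ∈ E2, w = a + b := by
    intro w hw
    have hKKw : K (K w) = w := by rw [p3 w hw, he1, one_smul]
    refine ⟨(1/2 : ℝ) • (w + K w), ?_, (1/2 : ℝ) • (w - K w), ?_, ?_⟩
    · rw [hE1def, Module.End.mem_eigenspace_iff, map_smul, map_add, hKKw, one_smul]
      module
    · rw [hE2def, Module.End.mem_eigenspace_iff, map_smul, map_sub, hKKw]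
      module
    · module
  have key : ∀ (A B : Submodule ℝ V7),
      (∀ x : V7, x ∈ A → x ∈ Wperp S) →
      (∀ x ∈ A, ∀ y ∈ A, H0 x y = 0) →
      (∀ w ∈ Wperp S, ∃ a ∈ A, ∃ b ∈ B, w = a + b) →
      Module.finrank ℝ A ≤ Module.finrank ℝ B := by
    intro A B hAW hisoA hdc
    let Bmap : A →ₗ[ℝ] Module.Dual ℝ B :=
      { toFun := fun x =>
          { toFun := fun y => H0 x.1 y.1
            map_add' := by intro a b; simp [H0_add_right]
            map_smul' := by intro c a; simp [H0_smul_right] }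
        map_add' := by
          intro a b; ext y; simp [H0_add_left]
        map_smul' := by
          intro c a; ext y; simp [H0_smul_left] }
    have hinj : Function.Injective Bmap := by
      rw [← LinearMap.ker_eq_bot, LinearMap.ker_eq_bot']
      intro m hm
      have hall : ∀ y ∈ Wperp S, H0 m.1 y = 0 := by
        intro y hy
        obtain ⟨a, ha, b, hb, rfl⟩ := hdc y hy
        rw [H0_add_right]
        have t1 : H0 m.1 a = 0 := hisoA m.1 m.2 a ha
        have t2 : H0 m.1 b = 0 := by
          have := DFunLike.congr_fun hm (⟨b, hb⟩ : B)
          simpa [Bmap] using this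
        rw [t1, t2, add_zero]
      have hz := hnd hS m.1 (hAW m.1 m.2) hall
      exact Subtype.ext hz
    calc Module.finrank ℝ A ≤ Module.finrank ℝ (Module.Dual ℝ B) :=
          LinearMap.finrank_le_finrank_of_injective hinj
      _ = Module.finrank ℝ B := Subspace.dual_finrank_eq
  have hd2 : ∀ w ∈ Wperp S, ∃ a ∈ E2, ∃ b ∈ E1, w = a + b := by
    intro w hw
    obtain ⟨a, ha, b, hb, hab⟩ := hdecomp w hw
    exact ⟨b, hb, a, ha, by rw [hab]; abel⟩
  exact le_antisymm (key E1 E2 hE1W hiso1 hdecomp) (key E2 E1 hE2W hiso2 hd2)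

end
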